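/- Let k be a field and let p, q ≥ 1 be integers. The kernel of the k-algebra homomorphism φ : k[x,y,z] → k[u,v] defined by φ(x) = u·v, φ(y) = v^{p+q}, φ(z) = u^{p+q} is the principal ideal generated by x^{p+q} - y·z. -/

import Mathlib

open MvPolynomial

namespace ApqAux

variable {k : Type} [Field k]




noncomputable def ψ (n : ℕ) (d : Fin 3 →₀ ℕ) : Fin 2 →₀ ℕ :=
  Finsupp.single 0 (d 0 + n * d 2) + Finsupp.single 1 (d 0 + n * d 1)

lemma ψ_apply0 (n : ℕ) (d : Fin 3 →₀ ℕ) : ψ n d 0 = d 0 + n * d 2 := by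
  simp [ψ, Finsupp.single_apply]

lemma ψ_apply1 (n : ℕ) (d : Fin 3 →₀ ℕ) : ψ n d 1 = d 0 + n * d 1 := by
  simp [ψ, Finsupp.single_apply]

lemma ψ_inj {n : ℕ} {d d' : Fin 3 →₀ ℕ} (hd : d 0 < n) (hd' : d' 0 < n)
    (h : ψ n d = ψ n d') : d = d' := by
  have h0 := congrArg (fun f => f 0) h
  have h1 := congrArg (fun f => f 1) h
  simp only [ψ_apply0, ψ_apply1] at h0 h1
  have hn : 0 < n := lt_of_le_of_lt (Nat.zero_le _) hd
  have e0 : d 0 = d' 0 := by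
    have := congrArg (· % n) h0
    simpa [Nat.add_mul_mod_self_left, Nat.mod_eq_of_lt hd, Nat.mod_eq_of_lt hd'] using this
  have e2 : d 2 = d' 2 := by
    rw [e0] at h0
    exact Nat.eq_of_mul_eq_mul_left hn (by omega)
  have e1 : d 1 = d' 1 := by
    rw [e0] at h1
    exact Nat.eq_of_mul_eq_mul_left hn (by omega)
  ext i
  fin_cases i <;> assumption

lemma phi_monomial (n : ℕ) (d : Fin 3 →₀ ℕ) (c : k) :
    aeval (![X 0 * X 1, (X 1) ^ n, (X 0) ^ n] : Fin 3 → MvPolynomial (Fin 2) k)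
      (monomial d c) = monomial (ψ n d) c := by
  rw [aeval_monomial, monomial_eq]
  rw [Finsupp.prod_fintype _ _ (fun i => pow_zero _),
      Finsupp.prod_fintype _ _ (fun i => pow_zero _)]
  rw [Fin.prod_univ_three, Fin.prod_univ_two]
  simp only [Matrix.cons_val_zero, Matrix.cons_val_one, Matrix.head_cons, Matrix.cons_val_two, Matrix.tail_cons, ψ_apply0, ψ_apply1]
  rw [algebraMap_eq]
  ring





lemma monomial_reduce (n : ℕ) (hn : 0 < n) :
    ∀ a : ℕ, ∀ d : Fin 3 →₀ ℕ, d 0 ≤ a → ∀ c : k,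
      ∃ r : MvPolynomial (Fin 3) k, (∀ e ∈ r.support, e 0 < n) ∧
        monomial d c - r ∈ Ideal.span {(X 0 : MvPolynomial (Fin 3) k) ^ n - X 1 * X 2} := by
  intro a
  induction a with
  | zero =>
    intro d hd c
    refine ⟨monomial d c, ?_, by simp⟩
    intro e he
    rw [mem_support_iff, coeff_monomial] at he
    split_ifs at he with h
    · subst h; omega
    · exact absurd rfl he
  | succ a ih =>
    intro d hd c
    by_cases h : d 0 < n
    · refine ⟨monomial d c, ?_, by simp⟩
      intro e he
      rw [mem_support_iff, coeff_monomial] at he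
      split_ifs at he with h2
      · subst h2; exact h
      · exact absurd rfl he
    · push_neg at h
      set d'' : Fin 3 →₀ ℕ := d - Finsupp.single 0 n with hd''
      have hd''0 : d'' 0 = d 0 - n := by simp [hd'']
      set d' : Fin 3 →₀ ℕ := d'' + Finsupp.single 1 1 + Finsupp.single 2 1 with hd'
      have hd'0 : d' 0 = d 0 - n := by
        simp [hd', hd''0, Finsupp.single_apply]
      have hle : d' 0 ≤ a := by rw [hd'0]; omega
      obtain ⟨r, hr1, hr2⟩ := ih d' hle c
      refine ⟨r, hr1, ?_⟩
      have hdd : d'' + Finsupp.single 0 n = d := by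
        ext i
        fin_cases i <;> simp [hd'', Finsupp.single_apply] <;> omega
      have e1 : (monomial d'' c : MvPolynomial (Fin 3) k) * X 0 ^ n = monomial d c := by
        rw [X_pow_eq_monomial, monomial_mul, mul_one, hdd]
      have e2 : (monomial d'' c : MvPolynomial (Fin 3) k) * (X 1 * X 2) = monomial d' c := by
        rw [X, X, monomial_mul, monomial_mul, mul_one, mul_one, hd']
        congr 1
        rw [add_assoc]
      have key : monomial d c - monomial d' c
          = monomial d'' c * ((X 0 : MvPolynomial (Fin 3) k) ^ n - X 1 * X 2) := by
        rw [mul_sub, e1, e2]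
      have mem1 : monomial d c - monomial d' c ∈
          Ideal.span {(X 0 : MvPolynomial (Fin 3) k) ^ n - X 1 * X 2} := by
        rw [key]
        exact Ideal.mul_mem_left _ _ (Ideal.subset_span rfl)
      have : monomial d c - r = (monomial d c - monomial d' c) + (monomial d' c - r) := by ring
      rw [this]
      exact Ideal.add_mem _ mem1 hr2

lemma reduce (n : ℕ) (hn : 0 < n) (f : MvPolynomial (Fin 3) k) :
    ∃ r : MvPolynomial (Fin 3) k, (∀ e ∈ r.support, e 0 < n) ∧
      f - r ∈ Ideal.span {(X 0 : MvPolynomial (Fin 3) k) ^ n - X 1 * X 2} := by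
  induction f using MvPolynomial.induction_on' with
  | monomial d c => exact monomial_reduce n hn (d 0) d le_rfl c
  | add f g hf hg =>
    obtain ⟨r1, hr1, hm1⟩ := hf
    obtain ⟨r2, hr2, hm2⟩ := hg
    refine ⟨r1 + r2, ?_, ?_⟩
    · intro e he
      rcases Finset.mem_union.mp (MvPolynomial.support_add he) with h | h
      · exact hr1 e h
      · exact hr2 e h
    · have : f + g - (r1 + r2) = (f - r1) + (g - r2) := by ring
      rw [this]
      exact Ideal.add_mem _ hm1 hm2

lemma injective_on_reduced (n : ℕ) (r : MvPolynomial (Fin 3) k)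
    (hr : ∀ e ∈ r.support, e 0 < n)
    (h0 : aeval (![X 0 * X 1, (X 1) ^ n, (X 0) ^ n] : Fin 3 → MvPolynomial (Fin 2) k) r = 0) :
    r = 0 := by
  have key : ∀ d ∈ r.support,
      coeff (ψ n d) (aeval (![X 0 * X 1, (X 1) ^ n, (X 0) ^ n] :
        Fin 3 → MvPolynomial (Fin 2) k) r) = coeff d r := by
    intro d hd
    conv_lhs => rw [r.as_sum]
    rw [map_sum]
    have : ∀ e ∈ r.support,
        (aeval (![X 0 * X 1, (X 1) ^ n, (X 0) ^ n] : Fin 3 → MvPolynomial (Fin 2) k))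
          (monomial e (coeff e r)) = monomial (ψ n e) (coeff e r) :=
      fun e _ => phi_monomial n e _
    rw [Finset.sum_congr rfl this, coeff_sum]
    rw [Finset.sum_eq_single d]
    · rw [coeff_monomial, if_pos rfl]
    · intro e he hne
      rw [coeff_monomial, if_neg]
      intro hψ
      exact hne (ψ_inj (hr e he) (hr d hd) hψ)
    · intro hd'; exact absurd hd hd'
  ext d
  by_cases hd : d ∈ r.support
  · have := key d hd
    rw [h0] at this
    simpa using this.symm
  · simpa using notMem_support_iff.mp hd


end ApqAux

open ApqAux

theorem Apq_kernel (k : Type) [Field k] (p q : ℕ) (hp : 1 ≤ p) (hq : 1 ≤ q) :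
    let φ : MvPolynomial (Fin 3) k →ₐ[k] MvPolynomial (Fin 2) k :=
      aeval ![X 0 * X 1, (X 1) ^ (p + q), (X 0) ^ (p + q)]
    RingHom.ker φ.toRingHom =
      Ideal.span {(X 0 : MvPolynomial (Fin 3) k) ^ (p + q) - X 1 * X 2} := by
  intro φ
  set n := p + q with hn
  have hn0 : 0 < n := by omega
  have hgen : φ ((X 0 : MvPolynomial (Fin 3) k) ^ n - X 1 * X 2) = 0 := by
    simp only [φ, map_sub, map_pow, map_mul, aeval_X, Matrix.cons_val_zero,
      Matrix.cons_val_one, Matrix.head_cons, Matrix.cons_val_two, Matrix.tail_cons]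
    ring
  have hle : Ideal.span {(X 0 : MvPolynomial (Fin 3) k) ^ n - X 1 * X 2}
      ≤ RingHom.ker φ.toRingHom := by
    rw [Ideal.span_le]
    intro x hx
    rw [Set.mem_singleton_iff] at hx
    subst hx
    exact hgen
  refine le_antisymm ?_ hle
  intro f hf
  rw [RingHom.mem_ker] at hf
  obtain ⟨r, hr1, hr2⟩ := reduce (k := k) n hn0 f
  have hφr : φ r = 0 := by
    have h1 : φ (f - r) = 0 := hle hr2
    rw [map_sub] at h1
    have : φ f = 0 := hf
    rw [this] at h1
    linear_combination -h1
  have hr0 : r = 0 := injective_on_reduced n r hr1 hφr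
  rw [hr0, sub_zero] at hr2
  exact hr2
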